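/- Let F : ℝⁿ → ℝⁿ be differentiable everywhere with Jacobian J(x), let x* ∈ ℝⁿ satisfy F(x*) = 0 with J* := J(x*) invertible and c := ‖J*⁻¹‖, and suppose ‖J(x) − J(x*)‖ ≤ M‖x − x*‖ for all x ∈ ℝⁿ, where M > 0. Let x ∈ ℝⁿ, let B ∈ ℝ^{n×n} be invertible, and set x₊ := x − B⁻¹F(x). Write σ := ‖B − J(x)‖_F and r := ‖x − x*‖. If c(σ + M r) < 1, then ‖x₊ − x*‖ ≤ ((3cMr/2 + cσ)/(1 − c(σ + M r))) · r. -/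

import Mathlib

open Matrix

noncomputable def vecNorm {n : ℕ} (u : Fin n → ℝ) : ℝ := Real.sqrt (∑ i, u i ^ 2)

noncomputable def frobNorm {n : ℕ} (M : Matrix (Fin n) (Fin n) ℝ) : ℝ :=
  Real.sqrt (∑ i, ∑ j, M i j ^ 2)

noncomputable def specNorm {n : ℕ} (M : Matrix (Fin n) (Fin n) ℝ) : ℝ :=
  sSup {r : ℝ | ∃ u : Fin n → ℝ, vecNorm u = 1 ∧ r = vecNorm (M.mulVec u)}

noncomputable def broyd {n : ℕ} (B A : Matrix (Fin n) (Fin n) ℝ) (u : Fin n → ℝ) :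
    Matrix (Fin n) (Fin n) ℝ :=
  B + (∑ i, u i ^ 2)⁻¹ • ((A - B) * Matrix.vecMulVec u u)

noncomputable def matCLM {n : ℕ} (M : Matrix (Fin n) (Fin n) ℝ) :
    (Fin n → ℝ) →L[ℝ] (Fin n → ℝ) :=
  LinearMap.toContinuousLinearMap M.mulVecLin

/-! ### Auxiliary lemmas -/

lemma vecNorm_eq {n : ℕ} (u : Fin n → ℝ) :
    vecNorm u = ‖(WithLp.equiv 2 (Fin n → ℝ)).symm u‖ := by
  rw [EuclideanSpace.norm_eq]
  simp [vecNorm, Real.norm_eq_abs, sq_abs]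

lemma vecNorm_nonneg {n : ℕ} (u : Fin n → ℝ) : 0 ≤ vecNorm u := Real.sqrt_nonneg _

lemma frobNorm_nonneg {n : ℕ} (M : Matrix (Fin n) (Fin n) ℝ) : 0 ≤ frobNorm M :=
  Real.sqrt_nonneg _

lemma vecNorm_add_le {n : ℕ} (u v : Fin n → ℝ) :
    vecNorm (u + v) ≤ vecNorm u + vecNorm v := by
  rw [vecNorm_eq, vecNorm_eq, vecNorm_eq]
  exact norm_add_le _ _

lemma vecNorm_sub_le {n : ℕ} (u v : Fin n → ℝ) :
    vecNorm (u - v) ≤ vecNorm u + vecNorm v := by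
  rw [vecNorm_eq, vecNorm_eq, vecNorm_eq]
  exact norm_sub_le _ _

lemma vecNorm_smul {n : ℕ} (a : ℝ) (u : Fin n → ℝ) :
    vecNorm (a • u) = |a| * vecNorm u := by
  rw [vecNorm_eq, vecNorm_eq, ← Real.norm_eq_abs]
  rw [show (WithLp.equiv 2 (Fin n → ℝ)).symm (a • u)
      = a • (WithLp.equiv 2 (Fin n → ℝ)).symm u from rfl, norm_smul]

lemma vecNorm_eq_zero {n : ℕ} {u : Fin n → ℝ} (h : vecNorm u = 0) : u = 0 := by
  rw [vecNorm_eq] at h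
  have := norm_eq_zero.mp h
  exact congrArg (WithLp.equiv 2 (Fin n → ℝ)) this

lemma mulVec_frob_bound {n : ℕ} (M : Matrix (Fin n) (Fin n) ℝ) (u : Fin n → ℝ) :
    vecNorm (M.mulVec u) ≤ frobNorm M * vecNorm u := by
  rw [vecNorm, frobNorm, vecNorm, ← Real.sqrt_mul (by positivity)]
  apply Real.sqrt_le_sqrt
  rw [Finset.sum_mul]
  apply Finset.sum_le_sum
  intro i _
  calc M.mulVec u i ^ 2 = (∑ j, M i j * u j) ^ 2 := by rfl
    _ ≤ (∑ j, M i j ^ 2) * ∑ j, u j ^ 2 := Finset.sum_mul_sq_le_sq_mul_sq _ _ _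

lemma specNorm_nonneg {n : ℕ} (M : Matrix (Fin n) (Fin n) ℝ) : 0 ≤ specNorm M := by
  apply Real.sSup_nonneg
  rintro r ⟨u, -, rfl⟩; exact vecNorm_nonneg _

lemma specSet_bddAbove {n : ℕ} (M : Matrix (Fin n) (Fin n) ℝ) :
    BddAbove {r : ℝ | ∃ u : Fin n → ℝ, vecNorm u = 1 ∧ r = vecNorm (M.mulVec u)} := by
  refine ⟨frobNorm M, ?_⟩
  rintro r ⟨u, hu, rfl⟩
  simpa [hu] using mulVec_frob_bound M u

lemma mulVec_spec_bound {n : ℕ} (M : Matrix (Fin n) (Fin n) ℝ) (u : Fin n → ℝ) :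
    vecNorm (M.mulVec u) ≤ specNorm M * vecNorm u := by
  rcases eq_or_ne u 0 with rfl | hu
  · simp [Matrix.mulVec_zero, vecNorm]
  · have ht : 0 < vecNorm u := by
      rcases lt_or_eq_of_le (vecNorm_nonneg u) with h | h
      · exact h
      · exact absurd (vecNorm_eq_zero h.symm) hu
    have h1 : vecNorm ((vecNorm u)⁻¹ • u) = 1 := by
      rw [vecNorm_smul, abs_of_pos (by positivity), inv_mul_cancel₀ ht.ne']
    have hmem : vecNorm (M.mulVec ((vecNorm u)⁻¹ • u)) ∈
        {r : ℝ | ∃ v : Fin n → ℝ, vecNorm v = 1 ∧ r = vecNorm (M.mulVec v)} :=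
      ⟨_, h1, rfl⟩
    have hle := le_csSup (specSet_bddAbove M) hmem
    rw [Matrix.mulVec_smul, vecNorm_smul, abs_of_pos (by positivity)] at hle
    calc vecNorm (M.mulVec u) = vecNorm u * ((vecNorm u)⁻¹ * vecNorm (M.mulVec u)) := by
          field_simp
      _ ≤ vecNorm u * specNorm M := mul_le_mul_of_nonneg_left hle ht.le
      _ = specNorm M * vecNorm u := mul_comm _ _

noncomputable def eCLE (n : ℕ) : EuclideanSpace ℝ (Fin n) ≃L[ℝ] (Fin n → ℝ) :=
  PiLp.continuousLinearEquiv 2 ℝ (fun _ : Fin n => ℝ)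

noncomputable def eL {n : ℕ} (M : Matrix (Fin n) (Fin n) ℝ) :
    EuclideanSpace ℝ (Fin n) →L[ℝ] EuclideanSpace ℝ (Fin n) :=
  ((eCLE n).symm.toContinuousLinearMap.comp (matCLM M)).comp (eCLE n).toContinuousLinearMap

lemma hFE {n : ℕ} (F : (Fin n → ℝ) → (Fin n → ℝ))
    (J : (Fin n → ℝ) → Matrix (Fin n) (Fin n) ℝ)
    (hF : ∀ x, HasFDerivAt F (matCLM (J x)) x) (y : EuclideanSpace ℝ (Fin n)) :
    HasFDerivAt (fun z : EuclideanSpace ℝ (Fin n) => (eCLE n).symm (F (eCLE n z)))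
      (eL (J (eCLE n y))) y := by
  have h1 : HasFDerivAt (fun z : EuclideanSpace ℝ (Fin n) => F (eCLE n z))
      ((matCLM (J (eCLE n y))).comp (eCLE n).toContinuousLinearMap) y :=
    (hF (eCLE n y)).comp y (eCLE n).hasFDerivAt
  have h2 := ((eCLE n).symm.hasFDerivAt.comp y h1 :)
  exact h2.congr_fderiv (by rw [eL, ContinuousLinearMap.comp_assoc])

lemma taylor_bound {n : ℕ} (F : (Fin n → ℝ) → (Fin n → ℝ))
    (J : (Fin n → ℝ) → Matrix (Fin n) (Fin n) ℝ)
    (hF : ∀ x, HasFDerivAt F (matCLM (J x)) x)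
    (xs : Fin n → ℝ) (M : ℝ)
    (hLip : ∀ x, specNorm (J x - J xs) ≤ M * vecNorm (x - xs))
    (x : Fin n → ℝ) :
    vecNorm (F x - F xs - (J xs).mulVec (x - xs))
      ≤ M / 2 * vecNorm (x - xs) ^ 2 := by
  set d : Fin n → ℝ := x - xs with hd
  set r : ℝ := vecNorm d with hr
  set toE : (Fin n → ℝ) → EuclideanSpace ℝ (Fin n) :=
    fun u => (WithLp.equiv 2 (Fin n → ℝ)).symm u with htoE
  set f : ℝ → EuclideanSpace ℝ (Fin n) :=
    fun t => toE (F (xs + t • d)) - toE (F xs) - t • toE ((J xs).mulVec d) with hf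
  have hrnn : 0 ≤ r := vecNorm_nonneg d
  have hderiv : ∀ t : ℝ, HasDerivAt f
      (toE (((J (xs + t • d)) - J xs).mulVec d)) t := by
    intro t
    have hγ : HasDerivAt (fun s : ℝ => toE (xs + s • d)) (toE d) t := by
      have : HasDerivAt (fun s : ℝ => s • toE d) ((1:ℝ) • toE d) t :=
        (hasDerivAt_id t).smul_const (toE d)
      have h := this.const_add (toE xs)
      rw [one_smul] at h
      convert h using 1
      case e'_4 | e'_5 | e'_6 => rfl
      case e'_8 => funext s; rfl
    have hc := (hFE F J hF (toE (xs + t • d))).comp_hasDerivAt t hγ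
    have hs : HasDerivAt (fun s : ℝ => s • toE ((J xs).mulVec d))
        (toE ((J xs).mulVec d)) t := by
      simpa using (hasDerivAt_id t).smul_const (toE ((J xs).mulVec d))
    have := (hc.sub_const (toE (F xs))).sub hs
    convert this using 1
    case e'_4 | e'_5 | e'_6 | e'_8 => rfl
    show toE (((J (xs + t • d)) - J xs).mulVec d)
        = eL (J (eCLE n (toE (xs + t • d)))) (toE d) - toE ((J xs).mulVec d)
    have : eL (J (xs + t • d)) (toE d) = toE ((J (xs + t • d)).mulVec d) := rfl
    rw [show (eCLE n) (toE (xs + t • d)) = xs + t • d from rfl, this]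
    show toE ((J (xs + t • d) - J xs).mulVec d)
        = toE ((J (xs + t • d)).mulVec d - (J xs).mulVec d)
    rw [Matrix.sub_mulVec]
  have hbound : ∀ t ∈ Set.Ico (0:ℝ) 1,
      ‖toE (((J (xs + t • d)) - J xs).mulVec d)‖ ≤ M * r ^ 2 * t := by
    intro t ht
    rw [← vecNorm_eq]
    calc vecNorm (((J (xs + t • d)) - J xs).mulVec d)
        ≤ specNorm ((J (xs + t • d)) - J xs) * r := mulVec_spec_bound _ _
      _ ≤ (M * vecNorm ((xs + t • d) - xs)) * r :=
          mul_le_mul_of_nonneg_right (hLip _) hrnn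
      _ = M * r ^ 2 * t := by
          rw [add_sub_cancel_left, show vecNorm (t • d) = |t| * vecNorm d from
            vecNorm_smul t d, abs_of_nonneg ht.1]
          ring
  have hB : ∀ t : ℝ, HasDerivAt (fun s => M * r ^ 2 / 2 * s ^ 2) (M * r ^ 2 * t) t := by
    intro t
    have := (hasDerivAt_pow 2 t).const_mul (M * r ^ 2 / 2)
    convert this using 1
    case e'_4 | e'_5 => rfl
    ring
  have key := image_norm_le_of_norm_deriv_right_le_deriv_boundary
    (f := f) (f' := fun t => toE (((J (xs + t • d)) - J xs).mulVec d))
    (a := 0) (b := 1)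
    (fun t _ => (hderiv t).continuousAt.continuousWithinAt)
    (fun t _ => (hderiv t).hasDerivWithinAt)
    (by simp [hf]) hB hbound (Set.right_mem_Icc.mpr zero_le_one)
  have hf1 : f 1 = toE (F x - F xs - (J xs).mulVec d) := by
    show toE (F (xs + (1:ℝ) • d)) - toE (F xs) - (1:ℝ) • toE ((J xs).mulVec d)
        = toE (F x - F xs - (J xs).mulVec d)
    rw [one_smul, one_smul, hd, add_sub_cancel]
    rfl
  rw [hf1, ← vecNorm_eq] at key
  calc vecNorm (F x - F xs - (J xs).mulVec (x - xs)) ≤ M * r ^ 2 / 2 * 1 ^ 2 := key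
    _ = M / 2 * vecNorm (x - xs) ^ 2 := by rw [← hd, ← hr]; ring

theorem r_update_bound {n : ℕ} (F : (Fin n → ℝ) → (Fin n → ℝ))
    (J : (Fin n → ℝ) → Matrix (Fin n) (Fin n) ℝ)
    (hF : ∀ x, HasFDerivAt F (matCLM (J x)) x)
    (xs : Fin n → ℝ) (hxs : F xs = 0) (hJs : IsUnit (J xs))
    (c : ℝ) (hc : c = specNorm (J xs)⁻¹)
    (M : ℝ) (hM : 0 < M)
    (hLip : ∀ x, specNorm (J x - J xs) ≤ M * vecNorm (x - xs))
    (x : Fin n → ℝ) (B : Matrix (Fin n) (Fin n) ℝ) (hB : IsUnit B)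
    (hmain : c * (frobNorm (B - J x) + M * vecNorm (x - xs)) < 1) :
    vecNorm ((x - B⁻¹.mulVec (F x)) - xs)
      ≤ (3 * c * M * vecNorm (x - xs) / 2 + c * frobNorm (B - J x))
          / (1 - c * (frobNorm (B - J x) + M * vecNorm (x - xs)))
        * vecNorm (x - xs) := by
  set d : Fin n → ℝ := x - xs with hd
  set r : ℝ := vecNorm d with hr
  set σ : ℝ := frobNorm (B - J x) with hσ
  set v : Fin n → ℝ := (x - B⁻¹.mulVec (F x)) - xs with hv
  have hrnn : 0 ≤ r := vecNorm_nonneg d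
  have hσnn : 0 ≤ σ := frobNorm_nonneg _
  have hcnn : 0 ≤ c := hc ▸ specNorm_nonneg _
  have hvnn : 0 ≤ vecNorm v := vecNorm_nonneg v
  have hdetB : IsUnit B.det := (Matrix.isUnit_iff_isUnit_det B).mp hB
  have hdetJ : IsUnit (J xs).det := (Matrix.isUnit_iff_isUnit_det _).mp hJs
  -- step 1 : B.mulVec v expressed
  have hv' : v = d - B⁻¹.mulVec (F x) := by rw [hv, hd]; abel
  have hBB : B.mulVec (B⁻¹.mulVec (F x)) = F x := by
    rw [Matrix.mulVec_mulVec, Matrix.mul_nonsing_inv _ hdetB, Matrix.one_mulVec]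
  have h1 : B.mulVec v
      = (B - J x).mulVec d + (J x - J xs).mulVec d
        - (F x - F xs - (J xs).mulVec d) := by
    rw [hv', Matrix.mulVec_sub, hBB, Matrix.sub_mulVec, Matrix.sub_mulVec, hxs]
    abel
  -- Lipschitz at x
  have hLx : specNorm (J x - J xs) ≤ M * r := hLip x
  -- taylor
  have hT : vecNorm (F x - F xs - (J xs).mulVec d) ≤ M / 2 * r ^ 2 :=
    taylor_bound F J hF xs M hLip x
  -- bound on B.mulVec v
  have h2 : vecNorm (B.mulVec v) ≤ σ * r + M * r * r + M / 2 * r ^ 2 := by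
    rw [h1]
    calc vecNorm ((B - J x).mulVec d + (J x - J xs).mulVec d
            - (F x - F xs - (J xs).mulVec d))
        ≤ vecNorm ((B - J x).mulVec d + (J x - J xs).mulVec d)
            + vecNorm (F x - F xs - (J xs).mulVec d) := vecNorm_sub_le _ _
      _ ≤ vecNorm ((B - J x).mulVec d) + vecNorm ((J x - J xs).mulVec d)
            + vecNorm (F x - F xs - (J xs).mulVec d) := by
          have := vecNorm_add_le ((B - J x).mulVec d) ((J x - J xs).mulVec d)
          linarith
      _ ≤ σ * r + M * r * r + M / 2 * r ^ 2 := by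
          have hb1 := mulVec_frob_bound (B - J x) d
          have hb2 := mulVec_spec_bound (J x - J xs) d
          have hb3 : specNorm (J x - J xs) * r ≤ (M * r) * r :=
            mul_le_mul_of_nonneg_right hLx hrnn
          rw [← hσ] at hb1
          linarith
  -- bound vecNorm v via J xs inverse
  have h3 : vecNorm v ≤ c * vecNorm ((J xs).mulVec v) := by
    have : (J xs)⁻¹.mulVec ((J xs).mulVec v) = v := by
      rw [Matrix.mulVec_mulVec, Matrix.nonsing_inv_mul _ hdetJ, Matrix.one_mulVec]
    calc vecNorm v = vecNorm ((J xs)⁻¹.mulVec ((J xs).mulVec v)) := by rw [this]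
      _ ≤ specNorm (J xs)⁻¹ * vecNorm ((J xs).mulVec v) := mulVec_spec_bound _ _
      _ = c * vecNorm ((J xs).mulVec v) := by rw [hc]
  have h4 : vecNorm ((J xs).mulVec v)
      ≤ vecNorm (B.mulVec v) + (σ + M * r) * vecNorm v := by
    have hsplit : (J xs).mulVec v
        = B.mulVec v - ((B - J x).mulVec v + (J x - J xs).mulVec v) := by
      rw [Matrix.sub_mulVec, Matrix.sub_mulVec]
      abel
    calc vecNorm ((J xs).mulVec v)
        ≤ vecNorm (B.mulVec v)
            + vecNorm ((B - J x).mulVec v + (J x - J xs).mulVec v) := by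
          rw [hsplit]; exact vecNorm_sub_le _ _
      _ ≤ vecNorm (B.mulVec v) + (σ + M * r) * vecNorm v := by
          have ht := vecNorm_add_le ((B - J x).mulVec v) ((J x - J xs).mulVec v)
          have hb1 := mulVec_frob_bound (B - J x) v
          have hb2 := mulVec_spec_bound (J x - J xs) v
          have hb3 : specNorm (J x - J xs) * vecNorm v ≤ (M * r) * vecNorm v :=
            mul_le_mul_of_nonneg_right hLx hvnn
          rw [← hσ] at hb1
          nlinarith
  -- combine
  have h5 : vecNorm v ≤ c * (vecNorm (B.mulVec v) + (σ + M * r) * vecNorm v) :=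
    h3.trans (mul_le_mul_of_nonneg_left h4 hcnn)
  have hD : 0 < 1 - c * (σ + M * r) := by linarith
  rw [div_mul_eq_mul_div, le_div_iff₀ hD]
  nlinarith [h5, mul_le_mul_of_nonneg_left h2 hcnn]
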